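/- arXiv:2008.04985 — 3 statements merged into one kernel-verified Lean document; each statement's English description precedes it below -/
import Mathlib

section
/- If at least one lot is held at a loss (some T_j < 0), then the tax liability function L_i (zero for u ≥ 0, equal to the minimum-tax allocation value for selling −u dollars when u < 0) takes a negative value at some point and is not convex on ℝ. -/
/-- If some lot is held at a loss (`T k < 0`), the per-asset tax liability
function takes a negative value somewhere and is not convex on its domain. -/
theorem tax_liability_neg_and_nonconvex_of_loss (m : ℕ) (q T : Fin m → ℝ)
    (hq : ∀ j, 0 < q j) (k : Fin m) (hk : T k < 0) :
    (∃ u : ℝ, (if 0 ≤ u then 0 else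
        sInf {t : ℝ | ∃ s : Fin m → ℝ,
          (∀ j, 0 ≤ s j ∧ s j ≤ q j) ∧ (∑ j, s j) = -u ∧ t = ∑ j, T j * s j}) < 0)
    ∧ ¬ ConvexOn ℝ (Set.Ici (-(∑ j, q j)))
        (fun u : ℝ => if 0 ≤ u then 0 else
          sInf {t : ℝ | ∃ s : Fin m → ℝ,
            (∀ j, 0 ≤ s j ∧ s j ≤ q j) ∧ (∑ j, s j) = -u ∧ t = ∑ j, T j * s j}) := by
  set L : ℝ → ℝ := fun u : ℝ => if 0 ≤ u then 0 else
    sInf {t : ℝ | ∃ s : Fin m → ℝ,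
      (∀ j, 0 ≤ s j ∧ s j ≤ q j) ∧ (∑ j, s j) = -u ∧ t = ∑ j, T j * s j} with hL
  have hqk : 0 < q k := hq k
  have hneg : ¬ (0 ≤ -(q k)) := by linarith
  -- the set for u = -(q k)
  set S : Set ℝ := {t : ℝ | ∃ s : Fin m → ℝ,
      (∀ j, 0 ≤ s j ∧ s j ≤ q j) ∧ (∑ j, s j) = -(-(q k)) ∧ t = ∑ j, T j * s j} with hS
  have hmem : T k * q k ∈ S := by
    refine ⟨fun j => if j = k then q k else 0, ?_, ?_, ?_⟩
    · intro j
      by_cases h : j = k <;> simp [h, hqk.le, (hq j).le]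
    · simp [Finset.sum_ite_eq', Finset.mem_univ]
    · rw [Finset.sum_eq_single k]
      · simp
      · intro j _ hj; simp [hj]
      · intro h; exact absurd (Finset.mem_univ k) h
  have hbdd : BddBelow S := by
    refine ⟨∑ j, min (T j) 0 * q j, ?_⟩
    rintro t ⟨s, hs, hsum, rfl⟩
    apply Finset.sum_le_sum
    intro j _
    rcases le_or_gt 0 (T j) with h | h
    · have : min (T j) 0 = 0 := min_eq_right h
      rw [this, zero_mul]
      exact mul_nonneg h (hs j).1
    · have : min (T j) 0 = T j := min_eq_left h.le
      rw [this]
      exact mul_le_mul_of_nonpos_left (hs j).2 h.le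
  have hLa : L (-(q k)) ≤ T k * q k := by
    simp only [hL, if_neg hneg]
    exact csInf_le hbdd hmem
  have hLa' : L (-(q k)) < 0 := lt_of_le_of_lt hLa (by nlinarith)
  constructor
  · exact ⟨-(q k), by simpa [hL] using hLa'⟩
  · intro hc
    have ha : -(q k) ∈ Set.Ici (-(∑ j, q j)) := by
      have : q k ≤ ∑ j, q j :=
        Finset.single_le_sum (fun j _ => (hq j).le) (Finset.mem_univ k)
      simp only [Set.mem_Ici]
      linarith
    have hb : q k ∈ Set.Ici (-(∑ j, q j)) := by
      have : 0 ≤ ∑ j, q j := Finset.sum_nonneg fun j _ => (hq j).le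
      simp only [Set.mem_Ici]
      linarith
    have := hc.2 ha hb (by norm_num : (0:ℝ) ≤ (1:ℝ)/2)
      (by norm_num : (0:ℝ) ≤ (1:ℝ)/2) (by norm_num)
    have hmid : (1:ℝ)/2 * (-(q k)) + (1:ℝ)/2 * (q k) = 0 := by ring
    have hL0 : L 0 = 0 := by simp [hL]
    have hLb : L (q k) = 0 := by simp [hL, hqk.le]
    simp only [smul_eq_mul] at this
    rw [hmid, hL0, hLb] at this
    linarith
end

section
/- Suppose f: ℝ → ℝ is convex when restricted to (−∞, 0] and convex when restricted to [0, ∞). Then the convex envelope can be computed with sign-restricted combinations: for all x, inf{ θ f(v) + (1−θ) f(w) : θ ∈ [0,1], x = θ v + (1−θ) w } = inf{ θ f(v) + (1−θ) f(w) : θ ∈ [0,1], x = θ v + (1−θ) w, v ≥ 0, w ≤ 0 }. -/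
/-- If `f` is convex on each half-line, the convex envelope can be computed
using sign-restricted two-point combinations (`v ≥ 0`, `w ≤ 0`). -/
theorem convex_envelope_sign_restricted (f : ℝ → ℝ)
    (hneg : ConvexOn ℝ (Set.Iic (0 : ℝ)) f) (hpos : ConvexOn ℝ (Set.Ici (0 : ℝ)) f)
    (x : ℝ) :
    sInf {y : EReal | ∃ θ v w : ℝ, θ ∈ Set.Icc (0 : ℝ) 1 ∧
        x = θ * v + (1 - θ) * w ∧ y = ((θ * f v + (1 - θ) * f w : ℝ) : EReal)}
      = sInf {y : EReal | ∃ θ v w : ℝ, θ ∈ Set.Icc (0 : ℝ) 1 ∧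
          x = θ * v + (1 - θ) * w ∧ 0 ≤ v ∧ w ≤ 0 ∧
          y = ((θ * f v + (1 - θ) * f w : ℝ) : EReal)} := by
  apply le_antisymm
  · apply sInf_le_sInf
    rintro y ⟨θ, v, w, hθ, hx, hv, hw, hy⟩
    exact ⟨θ, v, w, hθ, hx, hy⟩
  · apply le_sInf
    rintro y ⟨θ, v, w, ⟨hθ0, hθ1⟩, hx, hy⟩
    rcases le_total 0 v with hv | hv <;> rcases le_total 0 w with hw | hw
    · -- both nonneg: use f x with θ'=1, v'=x, w'=0
      have hxnn : 0 ≤ x := by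
        rw [hx]
        have h1 : 0 ≤ θ * v := mul_nonneg hθ0 hv
        have h2 : 0 ≤ (1 - θ) * w := mul_nonneg (by linarith) hw
        linarith
      have hfx : f x ≤ θ * f v + (1 - θ) * f w := by
        have := hpos.2 (Set.mem_Ici.mpr hv) (Set.mem_Ici.mpr hw) hθ0
          (by linarith : (0:ℝ) ≤ 1 - θ) (by ring)
        simpa [smul_eq_mul, ← hx] using this
      calc sInf {y : EReal | ∃ θ v w : ℝ, θ ∈ Set.Icc (0 : ℝ) 1 ∧
          x = θ * v + (1 - θ) * w ∧ 0 ≤ v ∧ w ≤ 0 ∧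
          y = ((θ * f v + (1 - θ) * f w : ℝ) : EReal)}
          ≤ ((f x : ℝ) : EReal) := by
            apply sInf_le
            exact ⟨1, x, 0, ⟨zero_le_one, le_refl 1⟩, by ring, hxnn, le_refl 0,
              by norm_num⟩
        _ ≤ y := by rw [hy]; exact_mod_cast hfx
    · -- v ≥ 0, w ≤ 0: already sign-restricted
      apply sInf_le
      exact ⟨θ, v, w, ⟨hθ0, hθ1⟩, hx, hv, hw, hy⟩
    · -- v ≤ 0, w ≥ 0: swap
      apply sInf_le
      refine ⟨1 - θ, w, v, ⟨by linarith, by linarith⟩, by rw [hx]; ring, hw, hv, ?_⟩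
      rw [hy]; norm_cast; ring
    · -- both nonpos: use f x with θ'=0, v'=0, w'=x
      have hxnp : x ≤ 0 := by
        rw [hx]
        have h1 : θ * v ≤ 0 := mul_nonpos_of_nonneg_of_nonpos hθ0 hv
        have h2 : (1 - θ) * w ≤ 0 := mul_nonpos_of_nonneg_of_nonpos (by linarith) hw
        linarith
      have hfx : f x ≤ θ * f v + (1 - θ) * f w := by
        have := hneg.2 (Set.mem_Iic.mpr hv) (Set.mem_Iic.mpr hw) hθ0
          (by linarith : (0:ℝ) ≤ 1 - θ) (by ring)
        simpa [smul_eq_mul, ← hx] using this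
      calc sInf {y : EReal | ∃ θ v w : ℝ, θ ∈ Set.Icc (0 : ℝ) 1 ∧
          x = θ * v + (1 - θ) * w ∧ 0 ≤ v ∧ w ≤ 0 ∧
          y = ((θ * f v + (1 - θ) * f w : ℝ) : EReal)}
          ≤ ((f x : ℝ) : EReal) := by
            apply sInf_le
            exact ⟨0, 0, x, ⟨le_refl 0, zero_le_one⟩, by ring, le_refl 0, hxnp,
              by norm_num⟩
        _ ≤ y := by rw [hy]; exact_mod_cast hfx
end

section
/- If for each i the gap between f_i and its convex envelope is bounded by δ_i ≥ 0 (i.e., 0 ≤ f_i(x) − f_i**(x) ≤ δ_i for all x), then the optimal values of the original and relaxed problems satisfy U⋆ ≤ U⋆_relax ≤ U⋆ + ∑_{i=1}^n δ_i, where U⋆ = sup_{u∈Ũ} [−f_0(u) − ∑_i f_i(u_i)] and U⋆_relax = sup_{u∈Ũ} [−f_0(u) − ∑_i f_i**(u_i)]. -/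
/-- If the envelope gaps are bounded by `δ_i`, then
`U⋆ ≤ U⋆_relax ≤ U⋆ + ∑ δ_i`. -/
theorem relaxation_gap_bound (n : ℕ) (Ut : Set (Fin n → ℝ)) (hUt : Ut.Nonempty)
    (f0 : (Fin n → ℝ) → ℝ) (f fenv : Fin n → ℝ → ℝ) (δ : Fin n → ℝ)
    (hconv : ∀ i, ConvexOn ℝ Set.univ (fenv i))
    (hle : ∀ i x, fenv i x ≤ f i x)
    (hδ : ∀ i, 0 ≤ δ i)
    (hgap : ∀ i x, f i x - fenv i x ≤ δ i) :
    (⨆ u : Ut, ((-f0 u.1 - ∑ i, f i (u.1 i) : ℝ) : EReal))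
        ≤ (⨆ u : Ut, ((-f0 u.1 - ∑ i, fenv i (u.1 i) : ℝ) : EReal))
    ∧ (⨆ u : Ut, ((-f0 u.1 - ∑ i, fenv i (u.1 i) : ℝ) : EReal))
        ≤ (⨆ u : Ut, ((-f0 u.1 - ∑ i, f i (u.1 i) : ℝ) : EReal))
            + ((∑ i, δ i : ℝ) : EReal) := by
  constructor
  · refine iSup_le fun u => le_trans ?_ (le_iSup _ u)
    exact_mod_cast sub_le_sub_left (Finset.sum_le_sum fun i _ => hle i (u.1 i)) _
  · refine iSup_le fun u => ?_
    have h1 : ((-f0 u.1 - ∑ i, fenv i (u.1 i) : ℝ) : EReal)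
        ≤ ((-f0 u.1 - ∑ i, f i (u.1 i) : ℝ) : EReal) + ((∑ i, δ i : ℝ) : EReal) := by
      rw [← EReal.coe_add]
      apply EReal.coe_le_coe_iff.2
      have : ∑ i, fenv i (u.1 i) ≥ ∑ i, f i (u.1 i) - ∑ i, δ i := by
        rw [← Finset.sum_sub_distrib]
        exact Finset.sum_le_sum fun i _ => sub_le_iff_le_add'.2
          (by linarith [hgap i (u.1 i)])
      linarith
    exact h1.trans (add_le_add_left (le_iSup (fun u : Ut => ((-f0 u.1 - ∑ i, f i (u.1 i) : ℝ) : EReal)) u) _)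
end
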